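/- Let n be a positive natural number, let x, y ∈ ℝⁿ be nonzero vectors, and let ε be a real number with 0 < ε ≤ 1/4. Suppose X̄, Ȳ ≥ 0 are real numbers satisfying |X̄ − ‖x‖| ≤ (ε/3)‖x‖ and |Ȳ − ‖y‖| ≤ (ε/3)‖y‖, and suppose s ∈ ℝ satisfies |s − ⟨x,y⟩/(‖x‖‖y‖)| ≤ (ε/4)·|⟨x,y⟩|/(‖x‖‖y‖). Then the estimator s' := X̄·Ȳ·s satisfies |s' − ⟨x,y⟩| ≤ ε·|⟨x,y⟩|. -/

import Mathlib

open RealInnerProductSpace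

private lemma ripe_aux_sq {ε c : ℝ} (hε : 0 < ε) (hε4 : ε ≤ 1 / 4)
    (h : c ≤ (1 + ε / 3) * (1 + ε / 3)) : c ≤ 169 / 144 := by nlinarith

private lemma ripe_aux_d1 {ε c : ℝ} (hε : 0 < ε) (hε4 : ε ≤ 1 / 4)
    (h : c ≤ (1 + ε / 3) * (1 + ε / 3)) : c - 1 ≤ 25 / 36 * ε := by nlinarith

private lemma ripe_aux_d2 {ε c : ℝ} (hε : 0 < ε) (hε4 : ε ≤ 1 / 4)
    (h : (1 - ε / 3) * (1 - ε / 3) ≤ c) : 1 - c ≤ 25 / 36 * ε := by nlinarith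

private lemma ripe_aux_key1 {t c I J : ℝ} (ht : 0 ≤ t) (hd1 : c - 1 ≤ t) (hd2 : 1 - c ≤ t)
    (h1 : I ≤ J) (h2 : -J ≤ I) : (c - 1) * I ≤ t * J := by
  nlinarith [mul_nonneg (by linarith : (0:ℝ) ≤ t - (c - 1)) (by linarith : (0:ℝ) ≤ J + I),
    mul_nonneg (by linarith : (0:ℝ) ≤ t + (c - 1)) (by linarith : (0:ℝ) ≤ J - I)]

private lemma ripe_aux_key2 {t c I J : ℝ} (ht : 0 ≤ t) (hd1 : c - 1 ≤ t) (hd2 : 1 - c ≤ t)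
    (h1 : I ≤ J) (h2 : -J ≤ I) : -(t * J) ≤ (c - 1) * I := by
  nlinarith [mul_nonneg (by linarith : (0:ℝ) ≤ t - (c - 1)) (by linarith : (0:ℝ) ≤ J - I),
    mul_nonneg (by linarith : (0:ℝ) ≤ t + (c - 1)) (by linarith : (0:ℝ) ≤ J + I)]

theorem ripe_relative_error
    {n : ℕ} (hn : 0 < n) (x y : EuclideanSpace ℝ (Fin n)) (hx : x ≠ 0) (hy : y ≠ 0)
    (ε : ℝ) (hε : 0 < ε) (hε4 : ε ≤ 1 / 4)
    (Xbar Ybar : ℝ) (hXbar0 : 0 ≤ Xbar) (hYbar0 : 0 ≤ Ybar)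
    (hXbar : |Xbar - ‖x‖| ≤ ε / 3 * ‖x‖) (hYbar : |Ybar - ‖y‖| ≤ ε / 3 * ‖y‖)
    (s : ℝ) (hs : |s - ⟪x, y⟫ / (‖x‖ * ‖y‖)| ≤ ε / 4 * |⟪x, y⟫| / (‖x‖ * ‖y‖)) :
    |Xbar * Ybar * s - ⟪x, y⟫| ≤ ε * |⟪x, y⟫| := by
  set a := ‖x‖ with ha'
  set b := ‖y‖ with hb'
  set I := (⟪x, y⟫ : ℝ) with hI'
  have ha : 0 < a := norm_pos_iff.mpr hx
  have hb : 0 < b := norm_pos_iff.mpr hy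
  have hab : 0 < a * b := mul_pos ha hb
  rw [abs_le] at hXbar hYbar hs ⊢
  have hIle : I ≤ |I| := le_abs_self I
  have hIge : -|I| ≤ I := neg_abs_le I
  have habs : 0 ≤ |I| := abs_nonneg I
  have hεI : 0 ≤ ε * |I| := mul_nonneg hε.le habs
  -- bounds on Xbar, Ybar
  have hX1 : Xbar ≤ (1 + ε / 3) * a := by linarith [hXbar.2]
  have hX2 : (1 - ε / 3) * a ≤ Xbar := by linarith [hXbar.1]
  have hY1 : Ybar ≤ (1 + ε / 3) * b := by linarith [hYbar.2]
  have hY2 : (1 - ε / 3) * b ≤ Ybar := by linarith [hYbar.1]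
  have h13 : (0:ℝ) ≤ 1 - ε / 3 := by linarith
  -- clear denominators in hs
  have hs1 : s * (a * b) - I ≤ ε / 4 * |I| := by
    have h := mul_le_mul_of_nonneg_right hs.2 hab.le
    rw [sub_mul, div_mul_cancel₀ _ hab.ne', div_mul_cancel₀ _ hab.ne'] at h
    linarith
  have hs2 : -(ε / 4 * |I|) ≤ s * (a * b) - I := by
    have h := mul_le_mul_of_nonneg_right hs.1 hab.le
    rw [neg_mul, sub_mul, div_mul_cancel₀ _ hab.ne', div_mul_cancel₀ _ hab.ne'] at h
    linarith
  -- product bounds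
  have hXY1 : Xbar * Ybar ≤ (1 + ε / 3) * (1 + ε / 3) * (a * b) := by
    have h := mul_le_mul hX1 hY1 hYbar0
      (mul_nonneg (by linarith : (0:ℝ) ≤ 1 + ε / 3) ha.le)
    calc Xbar * Ybar ≤ (1 + ε / 3) * a * ((1 + ε / 3) * b) := h
    _ = (1 + ε / 3) * (1 + ε / 3) * (a * b) := by ring
  have hXY2 : (1 - ε / 3) * (1 - ε / 3) * (a * b) ≤ Xbar * Ybar := by
    have h := mul_le_mul hX2 hY2 (mul_nonneg h13 hb.le) hXbar0
    calc (1 - ε / 3) * (1 - ε / 3) * (a * b)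
        = (1 - ε / 3) * a * ((1 - ε / 3) * b) := by ring
    _ ≤ Xbar * Ybar := h
  have hXYpos : 0 ≤ Xbar * Ybar := mul_nonneg hXbar0 hYbar0
  set c := Xbar * Ybar / (a * b) with hc'
  have hc0 : 0 ≤ c := div_nonneg hXYpos hab.le
  have hc1 : c ≤ (1 + ε / 3) * (1 + ε / 3) := by
    rw [hc', div_le_iff₀ hab]; exact hXY1
  have hc2 : (1 - ε / 3) * (1 - ε / 3) ≤ c := by
    rw [hc', le_div_iff₀ hab]; exact hXY2
  have hc3 : c ≤ 169 / 144 := ripe_aux_sq hε hε4 hc1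
  have hd1 : c - 1 ≤ 25 / 36 * ε := ripe_aux_d1 hε hε4 hc1
  have hd2 : 1 - c ≤ 25 / 36 * ε := ripe_aux_d2 hε hε4 hc2
  have hdecomp : Xbar * Ybar * s - I = c * (s * (a * b) - I) + (c - 1) * I := by
    field_simp [hc']
    have hca : c * (a * b) = Xbar * Ybar := by rw [hc']; exact div_mul_cancel₀ _ hab.ne'
    rw [← hca]; ring
  have hu : (0:ℝ) ≤ ε / 4 * |I| := by positivity
  have ht : (0:ℝ) ≤ 25 / 36 * ε := by linarith
  have hcd1 : c * (s * (a * b) - I) ≤ 169 / 144 * (ε / 4 * |I|) := by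
    calc c * (s * (a * b) - I) ≤ c * (ε / 4 * |I|) := mul_le_mul_of_nonneg_left hs1 hc0
    _ ≤ 169 / 144 * (ε / 4 * |I|) := mul_le_mul_of_nonneg_right hc3 hu
  have hcd2 : -(169 / 144 * (ε / 4 * |I|)) ≤ c * (s * (a * b) - I) := by
    have h1 : c * (-(ε / 4 * |I|)) ≤ c * (s * (a * b) - I) :=
      mul_le_mul_of_nonneg_left hs2 hc0
    have h2 : c * (ε / 4 * |I|) ≤ 169 / 144 * (ε / 4 * |I|) :=
      mul_le_mul_of_nonneg_right hc3 hu
    linarith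
  have key1 : (c - 1) * I ≤ 25 / 36 * ε * |I| :=
    ripe_aux_key1 ht hd1 hd2 hIle hIge
  have key2 : -(25 / 36 * ε * |I|) ≤ (c - 1) * I :=
    ripe_aux_key2 ht hd1 hd2 hIle hIge
  rw [hdecomp]
  constructor <;> [linarith; linarith]
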